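/- Let D, R ∈ ℝ^{p×p} be symmetric positive semidefinite, with block decompositions D = [[U₁,V₁],[V₁ᵀ,W₁]] and R = [[U₂,V₂],[V₂ᵀ,W₂]] (blocks of sizes q and p−q). Then the null space of W₁ − jW₂ is contained in the null space of V₁ − jV₂. -/

import Mathlib

open Matrix ComplexOrder

lemma posSemidef_map_ofReal {n : Type*} [Fintype n] [DecidableEq n]
    {A : Matrix n n ℝ} (hA : A.PosSemidef) : (A.map Complex.ofReal).PosSemidef := by
  open scoped MatrixOrder Matrix.Norms.L2Operator in
  obtain ⟨B, rfl⟩ := CStarAlgebra.nonneg_iff_eq_star_mul_self.mp hA.nonneg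
  rw [Matrix.star_eq_conjTranspose]
  have h : (Bᴴ * B).map (Complex.ofReal) = (B.map Complex.ofReal)ᴴ * (B.map Complex.ofReal) := by
    show (Bᴴ * B).map Complex.ofRealHom = _
    rw [Matrix.map_mul (f := Complex.ofRealHom)]
    rw [show (Bᴴ).map ⇑Complex.ofRealHom =
        Bᴴ.map Complex.ofReal from rfl,
      Matrix.conjTranspose_map (f := Complex.ofReal)
        (fun x => by simp [Complex.conj_ofReal])]
    rfl
  rw [h]
  exact Matrix.posSemidef_conjTranspose_mul_self _

-- From a PSD block matrix and (2,2)-block killing η, get: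
-- quadratic form value and V-block conclusion
lemma block_aux {q r : ℕ}
    (U : Matrix (Fin q) (Fin q) ℝ) (V : Matrix (Fin q) (Fin r) ℝ)
    (W : Matrix (Fin r) (Fin r) ℝ)
    (hD : (Matrix.fromBlocks U V Vᵀ W).PosSemidef)
    (η : Fin r → ℂ)
    (hW : (W.map Complex.ofReal).mulVec η = 0) :
    (V.map Complex.ofReal).mulVec η = 0 := by
  have hc : ((Matrix.fromBlocks U V Vᵀ W).map Complex.ofReal).PosSemidef :=
    posSemidef_map_ofReal hD
  rw [Matrix.fromBlocks_map] at hc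
  set x : Fin q ⊕ Fin r → ℂ := Sum.elim 0 η with hx
  have hmv : (Matrix.fromBlocks (U.map Complex.ofReal) (V.map Complex.ofReal)
      (Vᵀ.map Complex.ofReal) (W.map Complex.ofReal)).mulVec x
      = Sum.elim ((V.map Complex.ofReal).mulVec η) 0 := by
    rw [hx, Matrix.fromBlocks_mulVec]
    simp [hW]
  have hz : star x ⬝ᵥ (Matrix.fromBlocks (U.map Complex.ofReal) (V.map Complex.ofReal)
      (Vᵀ.map Complex.ofReal) (W.map Complex.ofReal)).mulVec x = 0 := by
    rw [hmv, hx]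
    simp [dotProduct]
  have := (hc.dotProduct_mulVec_zero_iff x).mp hz
  rw [hmv] at this
  have := congrFun this
  ext i
  simpa using this (Sum.inl i)

open Matrix in
theorem nullspace_inclusion_blocks
    (q r : ℕ)
    (U₁ U₂ : Matrix (Fin q) (Fin q) ℝ)
    (V₁ V₂ : Matrix (Fin q) (Fin r) ℝ)
    (W₁ W₂ : Matrix (Fin r) (Fin r) ℝ)
    (hD : (Matrix.fromBlocks U₁ V₁ V₁ᵀ W₁).PosSemidef)
    (hR : (Matrix.fromBlocks U₂ V₂ V₂ᵀ W₂).PosSemidef)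
    (η : Fin r → ℂ)
    (hη : (W₁.map Complex.ofReal - Complex.I • W₂.map Complex.ofReal).mulVec η = 0) :
    (V₁.map Complex.ofReal - Complex.I • V₂.map Complex.ofReal).mulVec η = 0 := by
  -- W₁ and W₂ are PSD (principal submatrices)
  have hW₁ : W₁.PosSemidef := hD.submatrix Sum.inr
  have hW₂ : W₂.PosSemidef := hR.submatrix Sum.inr
  have hW₁c := posSemidef_map_ofReal hW₁
  have hW₂c := posSemidef_map_ofReal hW₂
  have heq : (W₁.map Complex.ofReal).mulVec η
      = Complex.I • (W₂.map Complex.ofReal).mulVec η := by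
    rw [Matrix.sub_mulVec] at hη
    have h2 := sub_eq_zero.mp hη
    rw [h2, Matrix.smul_mulVec]
  set a := star η ⬝ᵥ (W₁.map Complex.ofReal).mulVec η with ha
  set b := star η ⬝ᵥ (W₂.map Complex.ofReal).mulVec η with hb
  have hab : a = Complex.I * b := by
    rw [ha, hb, heq, dotProduct_smul, smul_eq_mul]
  have ha0 : 0 ≤ a := hW₁c.dotProduct_mulVec_nonneg η
  have hb0 : 0 ≤ b := hW₂c.dotProduct_mulVec_nonneg η
  -- a, b are real nonneg, a = I b forces a = b = 0
  have haim : a.im = 0 := by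
    have := Complex.le_def.mp ha0
    exact this.2.symm
  have hbim : b.im = 0 := by
    have := Complex.le_def.mp hb0
    exact this.2.symm
  have hbre : b.re = 0 := by
    have : a.im = b.re := by rw [hab]; simp [Complex.mul_im, hbim]
    rw [← this, haim]
  have hbz : b = 0 := Complex.ext hbre hbim
  have haz : a = 0 := by rw [hab, hbz, mul_zero]
  have hW₁z : (W₁.map Complex.ofReal).mulVec η = 0 :=
    (hW₁c.dotProduct_mulVec_zero_iff η).mp haz
  have hW₂z : (W₂.map Complex.ofReal).mulVec η = 0 :=
    (hW₂c.dotProduct_mulVec_zero_iff η).mp hbz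
  have h1 := block_aux U₁ V₁ W₁ hD η hW₁z
  have h2 := block_aux U₂ V₂ W₂ hR η hW₂z
  rw [Matrix.sub_mulVec, h1, Matrix.smul_mulVec, h2]
  simp
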